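/- Normalization commutes with substitution: for every term t and substitution σ (such that all instantiations are well-formed terms), ⌈tσ⌉ = ⌈⌈t⌉σ⌉ = ⌈t⌈σ⌉⌉ = ⌈⌈t⌉⌈σ⌉⌉, where ⌈σ⌉ normalizes each value of σ. -/

import Mathlib

inductive BinOp : Type
  | enc | aenc | pair | sig
deriving DecidableEq

inductive Term : Type
  | atom : ℕ → Term
  | var  : ℕ → Term
  | bin  : BinOp → Term → Term → Term
  | priv : Term → Term
  | aci  : List Term → Term

def Term.subst (σ : ℕ → Term) : Term → Term
  | .atom a => .atom a
  | .var x => σ x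
  | .bin o p q => .bin o (p.subst σ) (q.subst σ)
  | .priv t => .priv (t.subst σ)
  | .aci L => .aci (L.attach.map fun p => p.1.subst σ)
decreasing_by
  all_goals simp_wf
  all_goals first
    | omega
    | (have := List.sizeOf_lt_of_mem p.2; omega)

def Term.elems : Term → Set Term
  | .aci L => ⋃ p ∈ L.attach, p.1.elems
  | t => {t}
decreasing_by
  have := List.sizeOf_lt_of_mem p.2; simp_wf; omega

def Term.subDag : Term → Set Term
  | .atom a => {.atom a}
  | .var x => {.var x}
  | .bin o p q => insert (.bin o p q) (p.subDag ∪ q.subDag)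
  | .priv t => insert (.priv t) t.subDag
  | .aci L => insert (.aci L) (⋃ p ∈ L.attach, p.1.subDag)
decreasing_by
  all_goals simp_wf
  all_goals first
    | omega
    | (have := List.sizeOf_lt_of_mem p.2; omega)

def Term.vars (t : Term) : Set ℕ := {x | Term.var x ∈ t.subDag}

def Term.Ground (t : Term) : Prop := t.vars = ∅

/-- Specification of the quasi-subterm function `sub`. -/
structure SubSpec where
  sub : Term → Set Term
  sub_atom : ∀ a, sub (.atom a) = {.atom a}
  sub_var : ∀ x, sub (.var x) = {.var x}
  sub_priv : ∀ t, sub (.priv t) = insert (.priv t) (sub t)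
  sub_bin : ∀ o p q, sub (.bin o p q) = insert (.bin o p q) (sub p ∪ sub q)
  sub_aci : ∀ L, sub (.aci L) = insert (.aci L) (⋃ p ∈ (Term.aci L).elems, sub p)

/-- Specification of the ACI normal form with respect to a strict total order `lt`. -/
structure NormSpec (lt : Term → Term → Prop) where
  nf : Term → Term
  nf_atom : ∀ a, nf (.atom a) = .atom a
  nf_var  : ∀ x, nf (.var x) = .var x
  nf_bin  : ∀ o p q, nf (.bin o p q) = .bin o (nf p) (nf q)
  nf_priv : ∀ t, nf (.priv t) = .priv (nf t)
  nf_aci_single : ∀ L t', nf '' (Term.aci L).elems = {t'} → nf (.aci L) = t'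
  nf_aci : ∀ L, (¬ ∃ t', nf '' (Term.aci L).elems = {t'}) →
      ∃ L' : List Term, List.Pairwise lt L' ∧
        (∀ s, s ∈ L' ↔ s ∈ nf '' (Term.aci L).elems) ∧ nf (.aci L) = .aci L'

/-- The derivable closure of a set `E` of terms under a deduction system `R`,
given as a set of rules (premises, conclusion): the least superset of `E`
closed under the rules. -/
inductive Der (R : Set (Set Term × Term)) (E : Set Term) : Term → Prop where
  | base {t : Term} : t ∈ E → Der R E t
  | step {l : Set Term} {r : Term} : (l, r) ∈ R → (∀ s ∈ l, Der R E s) → Der R E r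

/-- The composition rules of the DY+ACI deduction system (for normal form `nf`). -/
inductive DYComp (nf : Term → Term) : Set Term → Term → Prop where
  | enc  (t₁ t₂ : Term) : DYComp nf {t₁, t₂} (nf (.bin .enc t₁ t₂))
  | aenc (t₁ t₂ : Term) : DYComp nf {t₁, t₂} (nf (.bin .aenc t₁ t₂))
  | pair (t₁ t₂ : Term) : DYComp nf {t₁, t₂} (nf (.bin .pair t₁ t₂))
  | sig  (t₁ t₂ : Term) : DYComp nf {t₁, .priv t₂} (nf (.bin .sig t₁ (.priv t₂)))
  | aci  (L : List Term) (h : L ≠ []) : DYComp nf {t | t ∈ L} (nf (.aci L))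

/-- The composition rules of DY+ACI other than the ACI-set construction rule. -/
inductive DYCompNoACI (nf : Term → Term) : Set Term → Term → Prop where
  | enc  (t₁ t₂ : Term) : DYCompNoACI nf {t₁, t₂} (nf (.bin .enc t₁ t₂))
  | aenc (t₁ t₂ : Term) : DYCompNoACI nf {t₁, t₂} (nf (.bin .aenc t₁ t₂))
  | pair (t₁ t₂ : Term) : DYCompNoACI nf {t₁, t₂} (nf (.bin .pair t₁ t₂))
  | sig  (t₁ t₂ : Term) : DYCompNoACI nf {t₁, .priv t₂} (nf (.bin .sig t₁ (.priv t₂)))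

/-- The decomposition rules of the DY+ACI deduction system. -/
inductive DYDecomp (nf : Term → Term) : Set Term → Term → Prop where
  | enc  (t₁ t₂ : Term) : DYDecomp nf {.bin .enc t₁ t₂, nf t₂} (nf t₁)
  | aenc (t₁ t₂ : Term) : DYDecomp nf {.bin .aenc t₁ t₂, nf (.priv t₂)} (nf t₁)
  | fst  (t₁ t₂ : Term) : DYDecomp nf {.bin .pair t₁ t₂} (nf t₁)
  | snd  (t₁ t₂ : Term) : DYDecomp nf {.bin .pair t₁ t₂} (nf t₂)
  | aci  (L : List Term) (t : Term) (h : t ∈ L) : DYDecomp nf {.aci L} (nf t)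

/-- The DY+ACI deduction system as a set of rules. -/
def DYACI (nf : Term → Term) : Set (Set Term × Term) :=
  {p | DYComp nf p.1 p.2 ∨ DYDecomp nf p.1 p.2}

/-- A ground substitution `σ` is a model of a constraint system
`S = {Eᵢ ▷ tᵢ}` if `⌈tᵢσ⌉` is derivable from `⌈Eᵢσ⌉` in DY+ACI. -/
def Models (nf : Term → Term) (σ : ℕ → Term) (S : List (Set Term × Term)) : Prop :=
  ∀ c ∈ S, Der (DYACI nf) (nf '' ((fun t => t.subst σ) '' c.1)) (nf (c.2.subst σ))

/-- All terms occurring in a constraint system. -/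
def termsOf (S : List (Set Term × Term)) : Set Term :=
  ⋃ c ∈ S, c.1 ∪ {c.2}

/-- DAG-subterms of a constraint system. -/
def subDagS (S : List (Set Term × Term)) : Set Term :=
  ⋃ t ∈ termsOf S, t.subDag

/-- Variables of a constraint system. -/
def varsS (S : List (Set Term × Term)) : Set ℕ :=
  {x | Term.var x ∈ subDagS S}

/-- Applying a substitution to a constraint system. -/
def substS (θ : ℕ → Term) (S : List (Set Term × Term)) : List (Set Term × Term) :=
  S.map fun c => ((fun t => t.subst θ) '' c.1, c.2.subst θ)

/-- The domain of a substitution. -/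
def dom (θ : ℕ → Term) : Set ℕ := {x | θ x ≠ .var x}

@[simp] lemma elems_atom (a : ℕ) : Term.elems (.atom a) = {.atom a} := by rw [Term.elems]; simp
@[simp] lemma elems_var (x : ℕ) : Term.elems (.var x) = {.var x} := by rw [Term.elems]; simp
@[simp] lemma elems_bin (o p q) : Term.elems (.bin o p q) = {.bin o p q} := by rw [Term.elems]; simp
@[simp] lemma elems_priv (t) : Term.elems (.priv t) = {.priv t} := by rw [Term.elems]; simp
lemma elems_aci (L) : Term.elems (.aci L) = ⋃ m ∈ {m | m ∈ L}, Term.elems m := by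
  rw [Term.elems]; ext u; simp
@[simp] lemma subst_atom (σ) (a : ℕ) : Term.subst σ (.atom a) = .atom a := by rw [Term.subst]
@[simp] lemma subst_var (σ) (x : ℕ) : Term.subst σ (.var x) = σ x := by rw [Term.subst]
@[simp] lemma subst_bin (σ o p q) : Term.subst σ (.bin o p q) = .bin o (p.subst σ) (q.subst σ) := by rw [Term.subst]
@[simp] lemma subst_priv (σ t) : Term.subst σ (.priv t) = .priv (t.subst σ) := by rw [Term.subst]
lemma subst_aci (σ L) : Term.subst σ (.aci L) = .aci (L.map (Term.subst σ)) := by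
  rw [Term.subst]; simp
section Aux

lemma term_size_pos (t : Term) : 0 < sizeOf t := by cases t <;> simp <;> omega

lemma elems_size_aux : ∀ (n : ℕ) (t : Term), sizeOf t ≤ n → ∀ u ∈ t.elems, sizeOf u ≤ sizeOf t := by
  intro n
  induction n with
  | zero => intro t ht; have := term_size_pos t; omega
  | succ n ih =>
    intro t ht u hu
    cases t with
    | atom a => simp at hu; simp [hu]
    | var x => simp at hu; simp [hu]
    | bin o p q => simp at hu; simp [hu]
    | priv s => simp at hu; simp [hu]
    | aci L =>
      rw [elems_aci] at hu
      simp only [Set.mem_iUnion, Set.mem_setOf_eq] at hu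
      obtain ⟨m, hm, hum⟩ := hu
      have h1 : sizeOf m < sizeOf (Term.aci L) := by
        have := List.sizeOf_lt_of_mem hm; simp; omega
      have h2 := ih m (by omega) u hum
      omega

lemma elems_size (t : Term) : ∀ u ∈ t.elems, sizeOf u ≤ sizeOf t :=
  elems_size_aux (sizeOf t) t le_rfl

lemma mem_elems_aci_size (L : List Term) (u : Term) (hu : u ∈ (Term.aci L).elems) :
    sizeOf u < sizeOf (Term.aci L) := by
  rw [elems_aci] at hu
  simp only [Set.mem_iUnion, Set.mem_setOf_eq] at hu
  obtain ⟨m, hm, hum⟩ := hu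
  have h1 := List.sizeOf_lt_of_mem hm
  have h2 := elems_size m u hum
  simp; omega

lemma elems_elems_aux : ∀ (n : ℕ) (t : Term), sizeOf t ≤ n → ∀ u ∈ t.elems, u.elems = {u} := by
  intro n
  induction n with
  | zero => intro t ht; have := term_size_pos t; omega
  | succ n ih =>
    intro t ht u hu
    cases t with
    | atom a => simp at hu; simp [hu]
    | var x => simp at hu; simp [hu]
    | bin o p q => simp at hu; simp [hu]
    | priv s => simp at hu; simp [hu]
    | aci L =>
      rw [elems_aci] at hu
      simp only [Set.mem_iUnion, Set.mem_setOf_eq] at hu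
      obtain ⟨m, hm, hum⟩ := hu
      have h1 : sizeOf m < sizeOf (Term.aci L) := by
        have := List.sizeOf_lt_of_mem hm; simp; omega
      exact ih m (by omega) u hum

lemma elems_elems (t : Term) : ∀ u ∈ t.elems, u.elems = {u} :=
  elems_elems_aux (sizeOf t) t le_rfl

lemma elems_subst_aux : ∀ (n : ℕ) (t : Term), sizeOf t ≤ n → ∀ σ,
    (t.subst σ).elems = ⋃ u ∈ t.elems, (u.subst σ).elems := by
  intro n
  induction n with
  | zero => intro t ht; have := term_size_pos t; omega
  | succ n ih =>
    intro t ht σ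
    cases t with
    | atom a => simp
    | var x => simp
    | bin o p q => simp
    | priv s => simp
    | aci L =>
      rw [subst_aci, elems_aci, elems_aci]
      ext v
      simp only [Set.mem_iUnion, Set.mem_setOf_eq, List.mem_map]
      constructor
      · rintro ⟨m', ⟨m, hm, rfl⟩, hv⟩
        have hms : sizeOf m ≤ n := by
          have := List.sizeOf_lt_of_mem hm; simp at ht; omega
        rw [ih m hms σ] at hv
        simp only [Set.mem_iUnion] at hv
        obtain ⟨u, hu, hv⟩ := hv
        exact ⟨u, ⟨m, hm, hu⟩, hv⟩
      · rintro ⟨u, ⟨m, hm, hu⟩, hv⟩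
        have hms : sizeOf m ≤ n := by
          have := List.sizeOf_lt_of_mem hm; simp at ht; omega
        refine ⟨m.subst σ, ⟨m, hm, rfl⟩, ?_⟩
        rw [ih m hms σ]
        simp only [Set.mem_iUnion]
        exact ⟨u, hu, hv⟩

lemma elems_subst (t : Term) (σ : ℕ → Term) :
    (t.subst σ).elems = ⋃ u ∈ t.elems, (u.subst σ).elems :=
  elems_subst_aux (sizeOf t) t le_rfl σ

end Aux
section NF
variable {lt : Term → Term → Prop} (N : NormSpec lt)

lemma sorted_eq (hlt : IsStrictTotalOrder Term lt) : ∀ {L₁ L₂ : List Term}, L₁.Pairwise lt → L₂.Pairwise lt →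
    (∀ s, s ∈ L₁ ↔ s ∈ L₂) → L₁ = L₂ := by
  intro L₁ L₂ h1 h2 hm
  haveI := hlt
  haveI : IsAntisymm Term lt :=
    ⟨fun a b hab hba => absurd (trans_of lt hab hba) (irrefl_of lt a)⟩
  have n1 : L₁.Nodup := h1.imp (fun {a b} h => by rintro rfl; exact irrefl_of lt _ h)
  have n2 : L₂.Nodup := h2.imp (fun {a b} h => by rintro rfl; exact irrefl_of lt _ h)
  have perm : L₁.Perm L₂ := (List.perm_ext_iff_of_nodup n1 n2).2 hm
  exact List.Perm.eq_of_pairwise (fun a b _ _ hab hba => absurd (trans_of lt hab hba) (irrefl_of lt a)) h1 h2 perm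

lemma nf_aci_congr (hlt : IsStrictTotalOrder Term lt) : ∀ (M : List Term) (s : Term),
    N.nf '' (Term.aci M).elems = N.nf '' s.elems → N.nf (.aci M) = N.nf s := by
  intro M s h
  cases s with
  | atom a => exact N.nf_aci_single M _ (by simpa using h)
  | var x => exact N.nf_aci_single M _ (by simpa using h)
  | bin o p q => exact N.nf_aci_single M _ (by simpa using h)
  | priv s => exact N.nf_aci_single M _ (by simpa using h)
  | aci M₂ =>
    by_cases hs : ∃ t', N.nf '' (Term.aci M).elems = {t'}
    · obtain ⟨t', ht⟩ := hs
      rw [N.nf_aci_single M t' ht, N.nf_aci_single M₂ t' (h.symm.trans ht)]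
    · obtain ⟨L₁, p1, m1, e1⟩ := N.nf_aci M hs
      obtain ⟨L₂, p2, m2, e2⟩ := N.nf_aci M₂ (by rw [← h]; exact hs)
      rw [e1, e2]
      congr 1
      exact sorted_eq hlt p1 p2 (fun s => by rw [m1, m2, h])

lemma nf_idem_aux (hlt : IsStrictTotalOrder Term lt) : ∀ (n : ℕ) (t : Term), sizeOf t ≤ n →
    N.nf (N.nf t) = N.nf t ∧ N.nf '' (N.nf t).elems = N.nf '' t.elems := by
  intro n
  induction n with
  | zero => intro t ht; have := term_size_pos t; omega
  | succ n ih =>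
    intro t ht
    cases t with
    | atom a => constructor <;> simp [N.nf_atom]
    | var x => constructor <;> simp [N.nf_var]
    | bin o p q =>
      have hp := ih p (by simp at ht; omega)
      have hq := ih q (by simp at ht; omega)
      constructor
      · rw [N.nf_bin, N.nf_bin, hp.1, hq.1, ← N.nf_bin]
      · rw [N.nf_bin]; simp only [elems_bin, Set.image_singleton]
        rw [N.nf_bin, N.nf_bin, hp.1, hq.1]
    | priv s =>
      have hs := ih s (by simp at ht; omega)
      constructor
      · rw [N.nf_priv, N.nf_priv, hs.1, ← N.nf_priv]
      · rw [N.nf_priv]; simp only [elems_priv, Set.image_singleton]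
        rw [N.nf_priv, N.nf_priv, hs.1]
    | aci L =>
      have husz : ∀ u ∈ (Term.aci L).elems, sizeOf u ≤ n := by
        intro u hu; have := mem_elems_aci_size L u hu; omega
      by_cases hsing : ∃ t', N.nf '' (Term.aci L).elems = {t'}
      · obtain ⟨t', hS⟩ := hsing
        have h1 := N.nf_aci_single L t' hS
        have ht' : t' ∈ N.nf '' (Term.aci L).elems := by rw [hS]; rfl
        obtain ⟨u, hu, hnu⟩ := ht'
        have ihu := ih u (husz u hu)
        have heu : u.elems = {u} := elems_elems _ u hu
        constructor
        · rw [h1, ← hnu, ihu.1, hnu]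
        · rw [h1, ← hnu]
          rw [ihu.2, heu]
          simp only [Set.image_singleton]
          rw [hnu, hS]
      · obtain ⟨L', p', m', e'⟩ := N.nf_aci L hsing
        have hW : N.nf '' (Term.aci L').elems = N.nf '' (Term.aci L).elems := by
          ext v
          constructor
          · rintro ⟨w, hw, rfl⟩
            rw [elems_aci] at hw
            simp only [Set.mem_iUnion, Set.mem_setOf_eq] at hw
            obtain ⟨r, hr, hw⟩ := hw
            obtain ⟨u, hu, rfl⟩ := (m' r).1 hr
            have ihu := ih u (husz u hu)
            have hmem : N.nf w ∈ N.nf '' (N.nf u).elems := ⟨w, hw, rfl⟩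
            rw [ihu.2, elems_elems _ u hu] at hmem
            simp only [Set.image_singleton, Set.mem_singleton_iff] at hmem
            rw [hmem]
            exact ⟨u, hu, rfl⟩
          · rintro ⟨u, hu, rfl⟩
            have ihu := ih u (husz u hu)
            have hself : N.nf u ∈ N.nf '' (N.nf u).elems := by
              rw [ihu.2, elems_elems _ u hu]; simp
            have hr : N.nf u ∈ L' := (m' _).2 ⟨u, hu, rfl⟩
            obtain ⟨w, hw, hwv⟩ := hself
            refine ⟨w, ?_, hwv⟩
            rw [elems_aci]
            exact Set.mem_biUnion hr hw
        constructor
        · rw [e']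
          exact (nf_aci_congr N hlt L' (Term.aci L) hW).trans e'
        · rw [e']; exact hW

lemma nf_idem (hlt : IsStrictTotalOrder Term lt) (t : Term) : N.nf (N.nf t) = N.nf t :=
  (nf_idem_aux N hlt (sizeOf t) t le_rfl).1

lemma nf_elems_img (hlt : IsStrictTotalOrder Term lt) (t : Term) :
    N.nf '' (N.nf t).elems = N.nf '' t.elems :=
  (nf_idem_aux N hlt (sizeOf t) t le_rfl).2

lemma main_aux (hlt : IsStrictTotalOrder Term lt) : ∀ (n : ℕ) (t : Term), sizeOf t ≤ n →
    ∀ (σ σ' : ℕ → Term), (∀ x, N.nf (σ x) = N.nf (σ' x)) →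
    N.nf '' ((t.subst σ)).elems = N.nf '' (((N.nf t).subst σ')).elems ∧
    N.nf (t.subst σ) = N.nf ((N.nf t).subst σ') := by
  intro n
  induction n with
  | zero => intro t ht; have := term_size_pos t; omega
  | succ n ih =>
    intro t ht σ σ' h
    cases t with
    | atom a => constructor <;> simp [N.nf_atom]
    | var x =>
      constructor
      · rw [subst_var, N.nf_var, subst_var]
        rw [← nf_elems_img N hlt (σ x), ← nf_elems_img N hlt (σ' x), h x]
      · rw [subst_var, N.nf_var, subst_var]; exact h x
    | bin o p q =>
      have hp := ih p (by simp at ht; omega) σ σ' h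
      have hq := ih q (by simp at ht; omega) σ σ' h
      constructor
      · rw [N.nf_bin, subst_bin, subst_bin, elems_bin, elems_bin]
        simp only [Set.image_singleton]
        rw [N.nf_bin, N.nf_bin, hp.2, hq.2]
      · rw [N.nf_bin, subst_bin, subst_bin, N.nf_bin, N.nf_bin, hp.2, hq.2]
    | priv s =>
      have hs := ih s (by simp at ht; omega) σ σ' h
      constructor
      · rw [N.nf_priv, subst_priv, subst_priv, elems_priv, elems_priv]
        simp only [Set.image_singleton]
        rw [N.nf_priv, N.nf_priv, hs.2]
      · rw [N.nf_priv, subst_priv, subst_priv, N.nf_priv, N.nf_priv, hs.2]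
    | aci L =>
      have husz : ∀ u ∈ (Term.aci L).elems, sizeOf u ≤ n := fun u hu => by
        have := mem_elems_aci_size L u hu; omega
      have IHu := fun u (hu : u ∈ (Term.aci L).elems) => ih u (husz u hu) σ σ' h
      have hA : (Term.subst σ (Term.aci L)).elems
          = ⋃ u ∈ (Term.aci L).elems, (Term.subst σ u).elems := elems_subst (Term.aci L) σ
      by_cases hsing : ∃ t', N.nf '' (Term.aci L).elems = {t'}
      · obtain ⟨t', hS⟩ := hsing
        have h1 := N.nf_aci_single L t' hS
        have hall : ∀ u ∈ (Term.aci L).elems, N.nf u = t' := fun u hu => by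
          have hx : N.nf u ∈ N.nf '' (Term.aci L).elems := ⟨u, hu, rfl⟩
          rw [hS] at hx; exact hx
        have hne : ∃ u, u ∈ (Term.aci L).elems := by
          have hx : t' ∈ N.nf '' (Term.aci L).elems := by rw [hS]; rfl
          obtain ⟨u, hu, _⟩ := hx; exact ⟨u, hu⟩
        have hC : N.nf '' (Term.subst σ (Term.aci L)).elems
            = N.nf '' (Term.subst σ' t').elems := by
          rw [hA]
          ext v
          constructor
          · rintro ⟨w, hw, rfl⟩
            simp only [Set.mem_iUnion] at hw
            obtain ⟨u, hu, hw⟩ := hw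
            have hv : N.nf w ∈ N.nf '' (Term.subst σ u).elems := ⟨w, hw, rfl⟩
            rw [(IHu u hu).1, hall u hu] at hv
            exact hv
          · rintro hv
            obtain ⟨u, hu⟩ := hne
            rw [← hall u hu, ← (IHu u hu).1] at hv
            obtain ⟨w, hw, rfl⟩ := hv
            exact ⟨w, by simp only [Set.mem_iUnion]; exact ⟨u, hu, hw⟩, rfl⟩
        constructor
        · rw [h1]; exact hC
        · rw [h1, subst_aci]
          refine nf_aci_congr N hlt _ _ ?_
          rw [← subst_aci σ]
          exact hC
      · obtain ⟨L', p', m', e'⟩ := N.nf_aci L hsing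
        have hC : N.nf '' (Term.subst σ (Term.aci L)).elems
            = N.nf '' (Term.subst σ' (Term.aci L')).elems := by
          rw [hA, subst_aci σ']
          ext v
          constructor
          · rintro ⟨w, hw, rfl⟩
            simp only [Set.mem_iUnion] at hw
            obtain ⟨u, hu, hw⟩ := hw
            have hv : N.nf w ∈ N.nf '' (Term.subst σ u).elems := ⟨w, hw, rfl⟩
            rw [(IHu u hu).1] at hv
            obtain ⟨w', hw', hww⟩ := hv
            have hr : N.nf u ∈ L' := (m' _).2 ⟨u, hu, rfl⟩
            refine ⟨w', ?_, hww⟩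
            rw [elems_aci]
            simp only [Set.mem_iUnion, Set.mem_setOf_eq, List.mem_map]
            exact ⟨Term.subst σ' (N.nf u), ⟨N.nf u, hr, rfl⟩, hw'⟩
          · rintro ⟨w, hw, rfl⟩
            rw [elems_aci] at hw
            simp only [Set.mem_iUnion, Set.mem_setOf_eq, List.mem_map] at hw
            obtain ⟨mm, ⟨r, hr, rfl⟩, hw⟩ := hw
            obtain ⟨u, hu, rfl⟩ := (m' r).1 hr
            have hv : N.nf w ∈ N.nf '' (Term.subst σ' (N.nf u)).elems := ⟨w, hw, rfl⟩
            rw [← (IHu u hu).1] at hv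
            obtain ⟨w', hw', hww⟩ := hv
            exact ⟨w', by simp only [Set.mem_iUnion]; exact ⟨u, hu, hw'⟩, hww⟩
        constructor
        · rw [e']; exact hC
        · rw [e', subst_aci σ]
          refine nf_aci_congr N hlt _ _ ?_
          rw [← subst_aci σ]
          exact hC

end NF

/-- Normalization commutes with substitution. -/
theorem norm_subst_comm (lt : Term → Term → Prop) (hlt : IsStrictTotalOrder Term lt)
    (N : NormSpec lt) : ∀ (t : Term) (σ : ℕ → Term),
      N.nf (t.subst σ) = N.nf ((N.nf t).subst σ) ∧
      N.nf (t.subst σ) = N.nf (t.subst (fun x => N.nf (σ x))) ∧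
      N.nf (t.subst σ) = N.nf ((N.nf t).subst (fun x => N.nf (σ x))) := by
  intro t σ
  have Q1 := (main_aux N hlt (sizeOf t) t le_rfl σ σ (fun _ => rfl)).2
  have h1 : ∀ x, N.nf (σ x) = N.nf ((fun x => N.nf (σ x)) x) := fun x => (nf_idem N hlt (σ x)).symm
  have Q3 := (main_aux N hlt (sizeOf t) t le_rfl σ (fun x => N.nf (σ x)) h1).2
  have Q2 := (main_aux N hlt (sizeOf t) t le_rfl (fun x => N.nf (σ x)) (fun x => N.nf (σ x)) (fun _ => rfl)).2
  exact ⟨Q1, Q3.trans Q2.symm, Q3⟩
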